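/- The polynomial f' = x₁⁶x₂y₃ − x₂⁷y₃ − x₁⁶y₂ + x₁⁵x₂y₂ + x₂⁶y₂ + x₃y₂² + x₁⁶y₃² − x₁⁵x₂y₃² − x₂⁶y₃² − x₃y₂y₃² + x₁⁴x₃ + x₃² is irreducible in ℂ[x₁, x₂, y₃, y₂, x₃]. -/
import Mathlib


open MvPolynomial

noncomputable def myE : MvPolynomial (Fin 5) ℂ ≃ₐ[ℂ] Polynomial (MvPolynomial (Fin 4) ℂ) :=
  (renameEquiv ℂ (Equiv.swap 0 4)).trans (MvPolynomial.finSuccEquiv ℂ 4)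

lemma myE_X0 : myE (X 0) = Polynomial.C (X 3) := by
  simp only [myE, AlgEquiv.trans_apply, renameEquiv_apply, rename_X]
  rw [show Equiv.swap (0:Fin 5) 4 0 = Fin.succ 3 from rfl, finSuccEquiv_X_succ]
lemma myE_X1 : myE (X 1) = Polynomial.C (X 0) := by
  simp only [myE, AlgEquiv.trans_apply, renameEquiv_apply, rename_X]
  rw [show Equiv.swap (0:Fin 5) 4 1 = Fin.succ 0 from rfl, finSuccEquiv_X_succ]
lemma myE_X2 : myE (X 2) = Polynomial.C (X 1) := by
  simp only [myE, AlgEquiv.trans_apply, renameEquiv_apply, rename_X]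
  rw [show Equiv.swap (0:Fin 5) 4 2 = Fin.succ 1 from rfl, finSuccEquiv_X_succ]
lemma myE_X3 : myE (X 3) = Polynomial.C (X 2) := by
  simp only [myE, AlgEquiv.trans_apply, renameEquiv_apply, rename_X]
  rw [show Equiv.swap (0:Fin 5) 4 3 = Fin.succ 2 from rfl, finSuccEquiv_X_succ]
lemma myE_X4 : myE (X 4) = Polynomial.X := by
  simp only [myE, AlgEquiv.trans_apply, renameEquiv_apply, rename_X]
  rw [show Equiv.swap (0:Fin 5) 4 4 = 0 from rfl, finSuccEquiv_X_zero]

noncomputable def myP : MvPolynomial (Fin 4) ℂ := X 2 ^ 2 - X 2 * X 1 ^ 2 + X 3 ^ 4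
noncomputable def myQ : MvPolynomial (Fin 4) ℂ :=
  X 3 ^ 6 * X 0 * X 1 - X 0 ^ 7 * X 1 - X 3 ^ 6 * X 2 + X 3 ^ 5 * X 0 * X 2
  + X 0 ^ 6 * X 2 + X 3 ^ 6 * X 1 ^ 2 - X 3 ^ 5 * X 0 * X 1 ^ 2 - X 0 ^ 6 * X 1 ^ 2

lemma myE_f : myE
      (X 0 ^ 6 * X 1 * X 2 - X 1 ^ 7 * X 2 - X 0 ^ 6 * X 3 + X 0 ^ 5 * X 1 * X 3
        + X 1 ^ 6 * X 3 + X 4 * X 3 ^ 2 + X 0 ^ 6 * X 2 ^ 2 - X 0 ^ 5 * X 1 * X 2 ^ 2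
        - X 1 ^ 6 * X 2 ^ 2 - X 4 * X 3 * X 2 ^ 2 + X 0 ^ 4 * X 4 + X 4 ^ 2) =
    Polynomial.X ^ 2 + Polynomial.C myP * Polynomial.X + Polynomial.C myQ := by
  simp only [map_add, map_sub, map_mul, map_pow, myE_X0, myE_X1, myE_X2, myE_X3, myE_X4,
    myP, myQ, map_add, map_sub, map_mul, map_pow]
  ring

lemma not_square_D (r : MvPolynomial (Fin 4) ℂ) : r ^ 2 ≠ myP ^ 2 - 4 * myQ := by
  intro h
  have h2 := congrArg (aeval (![Polynomial.X, 1, 0, 0] : Fin 4 → Polynomial ℂ)) h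
  simp only [map_sub, map_add, map_mul, map_pow, map_ofNat, aeval_X, myP, myQ] at h2
  rw [show (![Polynomial.X, 1, 0, 0] : Fin 4 → Polynomial ℂ) 0 = Polynomial.X from rfl,
      show (![Polynomial.X, 1, 0, 0] : Fin 4 → Polynomial ℂ) 1 = 1 from rfl,
      show (![Polynomial.X, 1, 0, 0] : Fin 4 → Polynomial ℂ) 2 = 0 from rfl,
      show (![Polynomial.X, 1, 0, 0] : Fin 4 → Polynomial ℂ) 3 = 0 from rfl] at h2
  ring_nf at h2
  have hd : ((aeval (![Polynomial.X, 1, 0, 0] : Fin 4 → Polynomial ℂ)) r ^ 2).natDegree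
      = ((Polynomial.X : Polynomial ℂ) ^ 6 * 4 + Polynomial.X ^ 7 * 4).natDegree := by rw [h2]
  rw [Polynomial.natDegree_pow] at hd
  have : ((Polynomial.X : Polynomial ℂ) ^ 6 * 4 + Polynomial.X ^ 7 * 4).natDegree = 7 := by
    compute_degree!
  omega

noncomputable def fh : Polynomial (MvPolynomial (Fin 4) ℂ) :=
  Polynomial.X ^ 2 + Polynomial.C myP * Polynomial.X + Polynomial.C myQ

lemma fh_monic : fh.Monic := by
  rw [fh, add_assoc]
  exact Polynomial.monic_X_pow_add (n := 2)
    (lt_of_le_of_lt Polynomial.degree_linear_le (by norm_num))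

lemma fh_natDegree : fh.natDegree = 2 := by rw [fh]; compute_degree!

set_option synthInstance.maxHeartbeats 1000000 in
set_option maxHeartbeats 1000000 in
lemma fh_irreducible : Irreducible fh := by
  set R := MvPolynomial (Fin 4) ℂ
  set K := FractionRing R
  haveI : IsIntegrallyClosed R := inferInstance
  rw [fh_monic.irreducible_iff_irreducible_map_fraction_map (K := K)]
  have hmap : fh.map (algebraMap R K) =
      Polynomial.X ^ 2 + Polynomial.C (algebraMap R K myP) * Polynomial.X
        + Polynomial.C (algebraMap R K myQ) := by
    simp [fh, Polynomial.map_add, Polynomial.map_mul, Polynomial.map_pow]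
  have hdeg : (fh.map (algebraMap R K)).natDegree = 2 := by
    rw [fh_monic.natDegree_map, fh_natDegree]
  rw [Polynomial.irreducible_iff_roots_eq_zero_of_degree_le_three (by rw [hdeg]) (by rw [hdeg]; norm_num)]
  by_contra hne
  obtain ⟨x, hx⟩ := Multiset.exists_mem_of_ne_zero hne
  have hx0 : fh.map (algebraMap R K) ≠ 0 := fun h => by
    rw [h, Polynomial.natDegree_zero] at hdeg; omega
  rw [Polynomial.mem_roots hx0, Polynomial.IsRoot, hmap] at hx
  simp only [Polynomial.eval_add, Polynomial.eval_mul, Polynomial.eval_pow,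
    Polynomial.eval_X, Polynomial.eval_C] at hx
  have hq : (1 : K) * (x * x) + algebraMap R K myP * x + algebraMap R K myQ = 0 := by
    rw [← hx]; ring
  rw [quadratic_eq_zero_iff_discrim_eq_sq one_ne_zero] at hq
  set s : K := 2 * 1 * x + algebraMap R K myP with hs
  have hDs : algebraMap R K (myP ^ 2 - 4 * myQ) = s ^ 2 := by
    rw [← hq, discrim]; push_cast [map_sub, map_mul, map_pow, map_ofNat]; ring
  have hint : IsIntegral R s := by
    refine ⟨Polynomial.X ^ 2 - Polynomial.C (myP ^ 2 - 4 * myQ),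
      Polynomial.monic_X_pow_sub_C _ (by norm_num), ?_⟩
    simp [Polynomial.eval₂_sub, Polynomial.eval₂_pow, ← hDs]
  obtain ⟨r, hr⟩ := IsIntegrallyClosed.isIntegral_iff.mp hint
  apply not_square_D r
  apply IsFractionRing.injective R K
  rw [map_pow, hr, ← hDs]

/-- the defining equation f' of the endpoint hypersurface
X'₈ ⊂ ℙ(1,1,1,2,4) is an irreducible polynomial.
Variables: X 0 = x₁, X 1 = x₂, X 2 = y₃, X 3 = y₂, X 4 = x₃. -/
theorem fprime_irreducible :
    Irreducible
      (X 0 ^ 6 * X 1 * X 2 - X 1 ^ 7 * X 2 - X 0 ^ 6 * X 3 + X 0 ^ 5 * X 1 * X 3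
        + X 1 ^ 6 * X 3 + X 4 * X 3 ^ 2 + X 0 ^ 6 * X 2 ^ 2 - X 0 ^ 5 * X 1 * X 2 ^ 2
        - X 1 ^ 6 * X 2 ^ 2 - X 4 * X 3 * X 2 ^ 2 + X 0 ^ 4 * X 4 + X 4 ^ 2 :
        MvPolynomial (Fin 5) ℂ) := by
  have h := Irreducible.map (f := myE.symm.toMulEquiv) fh_irreducible
  have key : (X 0 ^ 6 * X 1 * X 2 - X 1 ^ 7 * X 2 - X 0 ^ 6 * X 3 + X 0 ^ 5 * X 1 * X 3
        + X 1 ^ 6 * X 3 + X 4 * X 3 ^ 2 + X 0 ^ 6 * X 2 ^ 2 - X 0 ^ 5 * X 1 * X 2 ^ 2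
        - X 1 ^ 6 * X 2 ^ 2 - X 4 * X 3 * X 2 ^ 2 + X 0 ^ 4 * X 4 + X 4 ^ 2 :
        MvPolynomial (Fin 5) ℂ) = myE.symm.toMulEquiv fh := by
    apply myE.injective
    rw [myE_f]
    show fh = myE (myE.symm fh)
    rw [AlgEquiv.apply_symm_apply]
  rw [key]
  exact h
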